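/- arXiv:1801.04595 — 2 statements merged into one kernel-verified Lean document; each statement's English description precedes it below -/
import Mathlib

section
/- Let G be a finite group of order ℓ acting by automorphisms on an abelian group A. If a ∈ A and g ∈ G satisfy [a, g, …, g] = 1 with n occurrences of g (iterated action-commutators), then [a,g]^(ℓ^(n-1)) = 1. -/
/-- Iterated generalized commutator for a group action:
`aengel a g 0 = a`, `aengel a g (n+1) = [aengel a g n, g]` where `[a,g] = a⁻¹ · (a • g)`. -/
def aengel {G A : Type*} [Group G] [CommGroup A] [MulDistribMulAction G A]
    (a : A) (g : G) : ℕ → A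
  | 0 => a
  | n + 1 => (aengel a g n)⁻¹ * g • aengel a g n

lemma aengel_shift {G A : Type*} [Group G] [CommGroup A] [MulDistribMulAction G A]
    (a : A) (g : G) (n : ℕ) : aengel a g (n + 1) = aengel (aengel a g 1) g n := by
  induction n with
  | zero => rfl
  | succ k ih =>
      have e : aengel a g (k+1+1) = (aengel a g (k+1))⁻¹ * g • aengel a g (k+1) := rfl
      rw [e, ih]
      rfl

lemma fixed_comm_pow {G A : Type*} [Group G] [CommGroup A] [MulDistribMulAction G A]
    (a : A) (g : G) (hfix : g • (a⁻¹ * g • a) = a⁻¹ * g • a) :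
    (a⁻¹ * g • a) ^ orderOf g = 1 := by
  set b := a⁻¹ * g • a with hb
  have key : ∀ j : ℕ, g ^ j • a = a * b ^ j := by
    intro j
    induction j with
    | zero => simp
    | succ k ih =>
      have : g ^ (k + 1) • a = g • (g ^ k • a) := by rw [← mul_smul, ← pow_succ']
      rw [this, ih, smul_mul', smul_pow', hfix, pow_succ', ← mul_assoc, hb,
        mul_inv_cancel_left]
  have h1 := key (orderOf g)
  rw [pow_orderOf_eq_one, one_smul] at h1
  exact (mul_left_cancel (a := a) (by rw [← h1, mul_one])).symm

theorem stmt_1 {G A : Type*} [Group G] [Finite G] [CommGroup A]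
    [MulDistribMulAction G A] (ℓ : ℕ) (hℓ : Nat.card G = ℓ)
    (a : A) (g : G) (n : ℕ) (hn : 1 ≤ n) (h : aengel a g n = 1) :
    (aengel a g 1) ^ (ℓ ^ (n - 1)) = 1 := by
  obtain ⟨m, rfl⟩ : ∃ m, n = m + 1 := ⟨n - 1, (Nat.succ_pred_eq_of_pos hn).symm⟩
  simp only [Nat.add_sub_cancel]
  clear hn
  induction m generalizing a with
  | zero => simpa using h
  | succ k ih =>
    have hb : aengel (aengel a g 1) g (k + 1) = 1 := by rw [← aengel_shift]; exact h
    have h1 := ih (aengel a g 1) hb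
    set b := aengel a g 1 with hbdef
    set N := ℓ ^ k with hN
    have hab : b = a⁻¹ * g • a := rfl
    have h2 : (b ^ N)⁻¹ * g • (b ^ N) = 1 := by
      have : aengel b g 1 = b⁻¹ * g • b := rfl
      rw [this] at h1
      rw [smul_pow', ← inv_pow, ← mul_pow]
      exact h1
    have hc : (a ^ N)⁻¹ * g • (a ^ N) = b ^ N := by
      rw [hab, smul_pow', ← inv_pow, ← mul_pow]
    have hfix : g • ((a ^ N)⁻¹ * g • (a ^ N)) = (a ^ N)⁻¹ * g • (a ^ N) := by
      rw [hc]
      have := mul_eq_one_iff_inv_eq.mp h2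
      rw [← this, inv_inv]
    have hord := fixed_comm_pow (a ^ N) g hfix
    rw [hc] at hord
    obtain ⟨t, ht⟩ : orderOf g ∣ ℓ := hℓ ▸ orderOf_dvd_natCard g
    calc b ^ ℓ ^ (k + 1) = ((b ^ N) ^ orderOf g) ^ t := by
          rw [← pow_mul, ← pow_mul, ← ht, ← pow_succ]
      _ = 1 := by rw [hord, one_pow]
end

section
/- Let G be a group, S a normal subgroup of G with G/S cyclic, and suppose the subgroup generated by all commutators [g,s] with g ∈ G, s ∈ S equals a subgroup N. Then the commutator subgroup G' equals ⟨[G,S]⟩, i.e., G' = N. -/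
theorem stmt_6 {G : Type*} [Group G] (S : Subgroup G) (hS : S.Normal)
    (hcyc : IsCyclic (G ⧸ S)) :
    commutator G = Subgroup.closure {x : G | ∃ g : G, ∃ s ∈ S, x = g⁻¹ * s⁻¹ * g * s} := by
  set T : Set G := {x : G | ∃ g : G, ∃ s ∈ S, x = g⁻¹ * s⁻¹ * g * s} with hT
  set N : Subgroup G := Subgroup.closure T with hN
  -- N is normal
  have hconj : ∀ x ∈ T, ∀ c : G, c * x * c⁻¹ ∈ T := by
    rintro x ⟨g, s, hs, rfl⟩ c
    exact ⟨c * g * c⁻¹, c * s * c⁻¹, hS.conj_mem s hs c, by group⟩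
  have hNnorm : N.Normal := by
    constructor
    intro n hn c
    induction hn using Subgroup.closure_induction with
    | mem x hx => exact Subgroup.subset_closure (hconj x hx c)
    | one => simpa using N.one_mem
    | mul x y _ _ hx hy =>
        have : c * (x * y) * c⁻¹ = (c * x * c⁻¹) * (c * y * c⁻¹) := by group
        rw [this]; exact N.mul_mem hx hy
    | inv x _ hx =>
        have : c * x⁻¹ * c⁻¹ = (c * x * c⁻¹)⁻¹ := by group
        rw [this]; exact N.inv_mem hx
  -- N ≤ S
  have hNS : N ≤ S := by
    rw [hN, Subgroup.closure_le]
    rintro x ⟨g, s, hs, rfl⟩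
    have h1 : g⁻¹ * s⁻¹ * g ∈ S := by
      have := hS.conj_mem s⁻¹ (S.inv_mem hs) g⁻¹
      simpa using this
    exact S.mul_mem h1 hs
  apply le_antisymm
  · -- commutator G ≤ N : use that G/N is abelian-enough via cyclic center quotient
    rw [commutator_def, Subgroup.commutator_le]
    intro g _ h _
    -- map G/N → G/S
    let f : G ⧸ N →* G ⧸ S := QuotientGroup.map N S (MonoidHom.id G) hNS
    have hker : f.ker ≤ Subgroup.center (G ⧸ N) := by
      intro x hx
      obtain ⟨a, rfl⟩ := QuotientGroup.mk_surjective x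
      have haS : a ∈ S := by
        have : ((a : G) : G ⧸ S) = 1 := hx
        exact (QuotientGroup.eq_one_iff a).mp this
      rw [Subgroup.mem_center_iff]
      intro y
      obtain ⟨b, rfl⟩ := QuotientGroup.mk_surjective y
      have : (b * a * b⁻¹ * a⁻¹ : G) ∈ N := by
        have : (b * a * b⁻¹ * a⁻¹ : G) = (b⁻¹)⁻¹ * (a⁻¹)⁻¹ * b⁻¹ * a⁻¹ := by group
        rw [this]
        exact Subgroup.subset_closure ⟨b⁻¹, a⁻¹, S.inv_mem haS, rfl⟩
      have hcomm : ((b * a : G) : G ⧸ N) = ((a * b : G) : G ⧸ N) := by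
        rw [QuotientGroup.eq]
        have h2 : (b * a)⁻¹ * (a * b) = (b⁻¹ * a⁻¹ * b * a)⁻¹ := by group
        rw [h2]
        exact N.inv_mem (Subgroup.subset_closure ⟨b, a, haS, rfl⟩)
      simpa using hcomm
    have hcomm := commutative_of_cyclic_center_quotient f hker (g : G ⧸ N) (h : G ⧸ N)
    have : ((g * h : G) : G ⧸ N) = ((h * g : G) : G ⧸ N) := by simpa using hcomm
    rw [QuotientGroup.eq] at this
    open scoped commutatorElement in
    have h3 : ⁅g, h⁆ = (g * h) * ((g * h)⁻¹ * (h * g))⁻¹ * (g * h)⁻¹ := by group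
    rw [h3]
    exact hNnorm.conj_mem _ (N.inv_mem this) (g * h)
  · rw [hN, Subgroup.closure_le]
    rintro x ⟨g, s, hs, rfl⟩
    open scoped commutatorElement in
    have : g⁻¹ * s⁻¹ * g * s = ⁅g⁻¹, s⁻¹⁆ := by group
    rw [this]
    exact Subgroup.commutator_mem_commutator (Subgroup.mem_top _) (Subgroup.mem_top _)
end
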